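/- Let G be the group presented with two generators p, γ and the relations p⁹ = 1 and γ⁻¹pγ = p⁴. Then G is isomorphic to the semidirect product (ℤ/9) ⋊ ℤ, where the generator 1 ∈ ℤ acts on ℤ/9 by multiplication by 4 (an automorphism of ℤ/9, since 4 is a unit modulo 9). -/

import Mathlib

namespace ClassicalZariski.Stmt3

/-- `p` in the free group on the two generators `p, γ`. -/
def p : FreeGroup (Fin 2) := FreeGroup.of 0

/-- `γ` in the free group on the two generators. -/
def g : FreeGroup (Fin 2) := FreeGroup.of 1

/-- The relations `p⁹ = 1` and `γ⁻¹ p γ = p⁴`. -/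
def rels : Set (FreeGroup (Fin 2)) :=
  { p ^ 9, (g⁻¹ * p * g) * (p ^ 4)⁻¹ }

/-- The group `G` presented by generators `p, γ` and relations `p⁹ = 1`, `γ⁻¹ p γ = p⁴`. -/
def G : Type := PresentedGroup rels

instance : Group G := by unfold G; infer_instance

/-- Multiplication by the unit `4` as an additive automorphism of `ℤ/9`. -/
def mul4 : AddAut (ZMod 9) :=
  DistribMulAction.toAddAut (ZMod 9)ˣ (ZMod 9) (ZMod.unitOfCoprime 4 (by norm_num))

/-- The same automorphism, viewed as a multiplicative automorphism of
`Multiplicative (ZMod 9)`. -/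
def mul4' : MulAut (Multiplicative (ZMod 9)) := AddEquiv.toMultiplicative mul4

/-- The action of `ℤ` on `ℤ/9` in which `1 ∈ ℤ` acts by multiplication by `4`. -/
def act : Multiplicative ℤ →* MulAut (Multiplicative (ZMod 9)) :=
  zpowersHom _ mul4'

/- ## Auxiliary constructions -/

open Multiplicative SemidirectProduct

/-- The semidirect product. -/
abbrev SD : Type := Multiplicative (ZMod 9) ⋊[act] Multiplicative ℤ

/-- The image of `p` in the presented group. -/
def P : PresentedGroup rels := PresentedGroup.of 0

/-- The image of `γ` in the presented group. -/
def Ga : PresentedGroup rels := PresentedGroup.of 1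

lemma mk_rel_one {r : FreeGroup (Fin 2)} (hr : r ∈ rels) : PresentedGroup.mk rels r = 1 :=
  (QuotientGroup.eq_one_iff _).mpr (Subgroup.subset_normalClosure hr)

lemma relP : P ^ 9 = 1 := by
  have := mk_rel_one (r := p ^ 9) (Or.inl rfl)
  simpa [P, PresentedGroup.of, p, map_pow] using this

lemma relC : Ga⁻¹ * P * Ga = P ^ 4 := by
  have := mk_rel_one (r := (g⁻¹ * p * g) * (p ^ 4)⁻¹) (Or.inr rfl)
  simp only [map_mul, map_inv, map_pow] at this
  have h : (PresentedGroup.mk rels g)⁻¹ * PresentedGroup.mk rels p * PresentedGroup.mk rels g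
      = (PresentedGroup.mk rels p) ^ 4 := by
    rw [← mul_inv_eq_one]; exact this
  exact h

lemma ppow (a b : ℕ) (h : a % 9 = b % 9) : P ^ a = P ^ b := by
  rw [pow_eq_pow_mod a relP, pow_eq_pow_mod b relP, h]

lemma conj4 (k : ℕ) : Ga⁻¹ * P ^ k * Ga = P ^ (4 * k) := by
  have : Ga⁻¹ * P ^ k * Ga = (Ga⁻¹ * P * Ga) ^ k := by
    induction k with
    | zero => simp
    | succ n ih => rw [pow_succ, pow_succ, ← ih]; group
  rw [this, relC, ← pow_mul, mul_comm]

lemma conj7 (k : ℕ) : Ga * P ^ k * Ga⁻¹ = P ^ (7 * k) := by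
  have h1 : Ga * P ^ 4 * Ga⁻¹ = P := by
    rw [← relC]; group
  have h2 : ∀ m : ℕ, Ga * P ^ (4 * m) * Ga⁻¹ = (Ga * P ^ 4 * Ga⁻¹) ^ m := by
    intro m
    induction m with
    | zero => simp
    | succ n ih =>
        rw [pow_succ, ← ih, Nat.mul_succ, pow_add]; group
  calc Ga * P ^ k * Ga⁻¹ = Ga * P ^ (4 * (7 * k)) * Ga⁻¹ := by
        rw [ppow k (4 * (7 * k)) (by omega)]
    _ = (Ga * P ^ 4 * Ga⁻¹) ^ (7 * k) := h2 (7 * k)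
    _ = P ^ (7 * k) := by rw [h1]

/-- The map `Multiplicative (ZMod 9) →* PresentedGroup rels`, `x ↦ P ^ x`. -/
def f1 : Multiplicative (ZMod 9) →* PresentedGroup rels :=
  AddMonoidHom.toMultiplicativeLeft
    (ZMod.lift 9 ⟨zmultiplesHom (Additive (PresentedGroup rels)) (Additive.ofMul P), by
      simp only [zmultiplesHom_apply]
      rw [show ((((9 : ℕ) : ℤ)) • Additive.ofMul P) = Additive.ofMul (P ^ (((9 : ℕ) : ℤ))) from
        (ofMul_zpow _ _).symm, zpow_natCast, relP]
      rfl⟩)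

lemma f1_apply (x : ZMod 9) : f1 (ofAdd x) = P ^ x.val := by
  have hx : (((x.val : ℤ) : ZMod 9)) = x := by
    push_cast
    exact ZMod.natCast_rightInverse x
  conv_lhs => rw [← hx]
  simp only [f1, AddMonoidHom.coe_toMultiplicativeLeft, Function.comp_apply, toAdd_ofAdd]
  rw [ZMod.lift_coe]
  simp only [zmultiplesHom_apply]
  rw [show ((x.val : ℤ) • Additive.ofMul P) = Additive.ofMul (P ^ (x.val : ℤ)) from
    (ofMul_zpow _ _).symm, zpow_natCast]
  rfl

/-- The map `Multiplicative ℤ →* PresentedGroup rels`, `n ↦ Ga⁻ⁿ`. -/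
def f2 : Multiplicative ℤ →* PresentedGroup rels := zpowersHom _ Ga⁻¹

lemma f2_apply (n : ℤ) : f2 (ofAdd n) = Ga⁻¹ ^ n := by
  simp [f2, zpowersHom_apply]

lemma key4 (x : ZMod 9) : Ga⁻¹ * f1 (ofAdd x) * Ga = f1 (ofAdd (4 * x)) := by
  rw [f1_apply, f1_apply, conj4]
  refine ppow _ _ ?_
  rw [ZMod.val_mul, show (4 : ZMod 9).val = 4 from rfl]
  omega

lemma key7 (x : ZMod 9) : Ga * f1 (ofAdd x) * Ga⁻¹ = f1 (ofAdd (7 * x)) := by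
  rw [f1_apply, f1_apply, conj7]
  refine ppow _ _ ?_
  rw [ZMod.val_mul, show (7 : ZMod 9).val = 7 from rfl]
  omega

lemma act_one (x : ZMod 9) : act (ofAdd (1 : ℤ)) (ofAdd x) = ofAdd (4 * x) := by
  show (mul4' ^ (1 : ℤ)) (ofAdd x) = ofAdd (4 * x)
  rw [zpow_one]
  show ofAdd (mul4 x) = ofAdd (4 * x)
  congr 1

lemma act_neg_one (x : ZMod 9) : act (ofAdd (-1 : ℤ)) (ofAdd x) = ofAdd (7 * x) := by
  have h1 : act (ofAdd (1 : ℤ)) (ofAdd (7 * x)) = ofAdd x := by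
    rw [act_one, ← mul_assoc, show (4 : ZMod 9) * 7 = 1 by decide, one_mul]
  rw [← h1, ← MulAut.mul_apply, ← map_mul act, ← ofAdd_add]
  norm_num

lemma compat : ∀ h : Multiplicative ℤ,
    f1.comp (act h).toMonoidHom = (MulAut.conj (f2 h)).toMonoidHom.comp f1 := by
  have key : ∀ n : ℤ, ∀ x : ZMod 9,
      f1 (act (ofAdd n) (ofAdd x)) = f2 (ofAdd n) * f1 (ofAdd x) * (f2 (ofAdd n))⁻¹ := by
    intro n
    induction n using Int.induction_on with
    | zero => intro x; simp
    | succ n ih =>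
        intro x
        have hsplit : (ofAdd ((n : ℤ) + 1)) = ofAdd (n : ℤ) * ofAdd (1 : ℤ) := by
          rw [← ofAdd_add]
        have e1 : act (ofAdd ((n : ℤ) + 1)) (ofAdd x) = act (ofAdd (n : ℤ)) (ofAdd (4 * x)) := by
          rw [hsplit, map_mul act, MulAut.mul_apply, act_one]
        have e2 : f2 (ofAdd ((n : ℤ) + 1)) = f2 (ofAdd (n : ℤ)) * Ga⁻¹ := by
          rw [hsplit, map_mul f2, f2_apply 1, zpow_one]
        rw [e1, ih (4 * x), ← key4 x, e2]
        group
    | pred n ih =>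
        intro x
        have hsplit : (ofAdd (-(n : ℤ) - 1)) = ofAdd (-(n : ℤ)) * ofAdd (-1 : ℤ) := by
          rw [← ofAdd_add, sub_eq_add_neg]
        have e1 : act (ofAdd (-(n : ℤ) - 1)) (ofAdd x)
            = act (ofAdd (-(n : ℤ))) (ofAdd (7 * x)) := by
          rw [hsplit, map_mul act, MulAut.mul_apply, act_neg_one]
        have e2 : f2 (ofAdd (-(n : ℤ) - 1)) = f2 (ofAdd (-(n : ℤ))) * Ga := by
          rw [hsplit, map_mul f2, f2_apply (-1), zpow_neg_one, inv_inv]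
        rw [e1, ih (7 * x), ← key7 x, e2]
        group
  intro h
  refine MonoidHom.ext fun y => ?_
  simp only [MonoidHom.comp_apply, MulEquiv.coe_toMonoidHom, MulAut.conj_apply]
  rw [show h = ofAdd h.toAdd from rfl, show y = ofAdd y.toAdd from rfl]
  exact key h.toAdd y.toAdd

/-- images of the generators in the semidirect product. -/
def fgen : Fin 2 → SD := ![inl (ofAdd (1 : ZMod 9)), inr (ofAdd (-1 : ℤ))]

lemma rels_check : ∀ r ∈ rels, FreeGroup.lift fgen r = 1 := by
  intro r hr
  rcases hr with rfl | rfl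
  · simp only [p, map_pow, FreeGroup.lift_apply_of]
    show (inl (ofAdd (1 : ZMod 9)) : SD) ^ 9 = 1
    rw [← map_pow, ← ofAdd_nsmul, show ((9 : ℕ) • (1 : ZMod 9)) = 0 by decide, ofAdd_zero,
      map_one]
  · simp only [p, g, map_mul, map_inv, map_pow, FreeGroup.lift_apply_of]
    show (inr (ofAdd (-1 : ℤ)) : SD)⁻¹ * inl (ofAdd (1 : ZMod 9)) * inr (ofAdd (-1 : ℤ)) *
        ((inl (ofAdd (1 : ZMod 9)) : SD) ^ 4)⁻¹ = 1
    have hneg : (ofAdd (-1 : ℤ)) = (ofAdd (1 : ℤ))⁻¹ := by rw [← ofAdd_neg]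
    calc (inr (ofAdd (-1 : ℤ)) : SD)⁻¹ * inl (ofAdd (1 : ZMod 9)) * inr (ofAdd (-1 : ℤ)) *
          ((inl (ofAdd (1 : ZMod 9)) : SD) ^ 4)⁻¹
        = inr (ofAdd (1 : ℤ)) * inl (ofAdd (1 : ZMod 9)) * inr ((ofAdd (1 : ℤ))⁻¹) *
          ((inl (ofAdd (1 : ZMod 9)) : SD) ^ 4)⁻¹ := by
          rw [hneg, map_inv, inv_inv]
      _ = inl (act (ofAdd (1 : ℤ)) (ofAdd (1 : ZMod 9))) *
          ((inl (ofAdd (1 : ZMod 9)) : SD) ^ 4)⁻¹ := by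
          rw [SemidirectProduct.inl_aut]
      _ = 1 := by
          rw [act_one, ← map_pow, ← map_inv, ← map_mul,
            show (ofAdd (4 * (1 : ZMod 9))) * ((ofAdd (1 : ZMod 9)) ^ 4)⁻¹ = 1 by decide,
            map_one]

/-- The forward homomorphism. -/
def phi : PresentedGroup rels →* SD := PresentedGroup.toGroup rels_check

/-- The backward homomorphism. -/
def psi : SD →* PresentedGroup rels := SemidirectProduct.lift f1 f2 compat

lemma phi_P : phi P = inl (ofAdd (1 : ZMod 9)) := PresentedGroup.toGroup.of rels_check

lemma phi_Ga : phi Ga = inr (ofAdd (-1 : ℤ)) := PresentedGroup.toGroup.of rels_check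

lemma psi_phi : psi.comp phi = MonoidHom.id _ := by
  apply PresentedGroup.ext
  intro x
  fin_cases x
  · show psi (phi P) = P
    rw [phi_P, show psi (inl (ofAdd (1 : ZMod 9))) = f1 (ofAdd (1 : ZMod 9)) from
      SemidirectProduct.lift_inl _ _ _ _, f1_apply,
      show (1 : ZMod 9).val = 1 from rfl, pow_one]
  · show psi (phi Ga) = Ga
    rw [phi_Ga, show psi (inr (ofAdd (-1 : ℤ))) = f2 (ofAdd (-1 : ℤ)) from
      SemidirectProduct.lift_inr _ _ _ _, f2_apply, zpow_neg_one, inv_inv]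

lemma phi_psi : phi.comp psi = MonoidHom.id _ := by
  apply SemidirectProduct.hom_ext
  · refine MonoidHom.ext fun x => ?_
    show phi (psi (inl (ofAdd x.toAdd))) = inl (ofAdd x.toAdd)
    rw [show psi (inl (ofAdd x.toAdd)) = f1 (ofAdd x.toAdd) from
      SemidirectProduct.lift_inl _ _ _ _,
      f1_apply, map_pow, phi_P, ← map_pow, ← ofAdd_nsmul]
    congr 1
    rw [nsmul_eq_mul, mul_one]
    exact congrArg ofAdd (ZMod.natCast_rightInverse x.toAdd)
  · apply MonoidHom.ext_mint
    show phi (psi (inr (ofAdd (1 : ℤ)))) = inr (ofAdd (1 : ℤ))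
    rw [show psi (inr (ofAdd (1 : ℤ))) = f2 (ofAdd (1 : ℤ)) from
      SemidirectProduct.lift_inr _ _ _ _,
      f2_apply, zpow_one, map_inv, phi_Ga, ← map_inv, ← ofAdd_neg]
    norm_num

/-- The isomorphism. -/
def theIso : PresentedGroup rels ≃* SD :=
  MonoidHom.toMulEquiv phi psi psi_phi phi_psi

theorem iso_semidirect :
    (∀ x : ZMod 9,
        act (Multiplicative.ofAdd (1 : ℤ)) (Multiplicative.ofAdd x) =
          Multiplicative.ofAdd (4 * x)) ∧
    Nonempty (G ≃* Multiplicative (ZMod 9) ⋊[act] Multiplicative ℤ) := by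
  exact ⟨act_one, ⟨theIso⟩⟩

end ClassicalZariski.Stmt3
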